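/- arXiv:2408.07361 — 6 statements merged into one kernel-verified Lean document; each statement's English description precedes it below -/
import Mathlib

section
/- A solution φ satisfies higher direct liability and independent indirect liabilities if and only if there exists a weight vector π ∈ [0,1]ⁿ such that for all i < j, φ(i,j) = (1 − π_j)·φ(j,j), and for each i, φ(i,i) = ℓ_i + ∑_{k > i} (∏_{i < j ≤ k} π_j)·ℓ_k. -/
open Finset

private lemma fil_le (n : ℕ) (i : Fin n) :
    univ.filter (fun j => i ≤ j) = insert i (univ.filter (fun j => i < j)) := by
  ext j
  simp only [mem_filter, mem_univ, true_and, mem_insert, Fin.le_def, Fin.lt_def, Fin.ext_iff]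
  omega

private lemma fil_lt (n : ℕ) (i i' : Fin n) (h : (i' : ℕ) = (i : ℕ) + 1) :
    univ.filter (fun j => i < j) = insert i' (univ.filter (fun j => i' < j)) := by
  ext j
  simp only [mem_filter, mem_univ, true_and, mem_insert, Fin.lt_def, Fin.ext_iff]
  omega

private lemma fil_last (n : ℕ) (i : Fin n) (h : (i : ℕ) + 1 = n) :
    univ.filter (fun j => i < j) = ∅ := by
  ext j
  have := j.isLt
  simp only [mem_filter, mem_univ, true_and, Fin.lt_def, notMem_empty, iff_false]
  omega

private lemma fil_sing (n : ℕ) (i i' : Fin n) (h : (i' : ℕ) = (i : ℕ) + 1) :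
    univ.filter (fun j => i < j ∧ j ≤ i') = {i'} := by
  ext j
  simp only [mem_filter, mem_univ, true_and, mem_singleton, Fin.le_def, Fin.lt_def, Fin.ext_iff]
  omega

private lemma fil_prod (n : ℕ) (i i' k : Fin n) (h : (i' : ℕ) = (i : ℕ) + 1) (hk : i' < k) :
    univ.filter (fun j => i < j ∧ j ≤ k)
      = insert i' (univ.filter (fun j => i' < j ∧ j ≤ k)) := by
  ext j
  have hk' := Fin.lt_def.mp hk
  simp only [mem_filter, mem_univ, true_and, mem_insert, Fin.le_def, Fin.lt_def, Fin.ext_iff]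
  omega

/-- Recurrence: from balance and independence, φ i i + φ i i' = ℓ i + φ i' i'. -/
private lemma recur (n : ℕ) (ℓ : Fin n → ℝ) (φ : Fin n → Fin n → ℝ)
    (hbalance : ∀ i : Fin n,
      ∑ j ∈ univ.filter (fun j => i ≤ j), φ i j = ∑ j ∈ univ.filter (fun j => i ≤ j), ℓ j)
    (hind : ∀ i j k : Fin n, i < j → j < k → φ i k = φ j k)
    (i i' : Fin n) (h : (i' : ℕ) = (i : ℕ) + 1) :
    φ i i + φ i i' = ℓ i + φ i' i' := by
  have hii' : i < i' := by rw [Fin.lt_def]; omega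
  have hb := hbalance i
  have hb' := hbalance i'
  have hnot1 : i ∉ insert i' (univ.filter (fun j => i' < j)) := by
    simp only [mem_insert, mem_filter, mem_univ, true_and, Fin.lt_def, Fin.ext_iff]
    omega
  have hnot2 : i' ∉ univ.filter (fun j => i' < j) := by
    simp only [mem_filter, mem_univ, true_and]
    exact lt_irrefl i'
  have hnot3 : i' ∉ univ.filter (fun j => i' < j) := hnot2
  rw [fil_le, fil_lt n i i' h, sum_insert hnot1, sum_insert hnot2,
    sum_insert hnot1, sum_insert hnot2] at hb
  rw [fil_le, sum_insert hnot3, sum_insert hnot3] at hb'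
  have htail : ∑ j ∈ univ.filter (fun j => i' < j), φ i j
      = ∑ j ∈ univ.filter (fun j => i' < j), φ i' j := by
    refine sum_congr rfl fun j hj => ?_
    simp only [mem_filter, mem_univ, true_and] at hj
    exact hind i i' j hii' hj
  rw [htail] at hb
  linarith

/-- A solution φ satisfies higher direct liability and independent
indirect liabilities iff there are weights π ∈ [0,1]ⁿ with φ(i,j) = (1-π_j)·φ(j,j)
for i < j and φ(i,i) = ℓ_i + ∑_{k>i} (∏_{i<j≤k} π_j)·ℓ_k. -/
theorem stmt_1 (n : ℕ) (ℓ : Fin n → ℝ) (φ : Fin n → Fin n → ℝ)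
    (hℓ : ∀ i, 0 < ℓ i)
    (hnonneg : ∀ i j, 0 ≤ φ i j)
    (hzero : ∀ i j : Fin n, j < i → φ i j = 0)
    (hbalance : ∀ i : Fin n,
      ∑ j ∈ univ.filter (fun j => i ≤ j), φ i j = ∑ j ∈ univ.filter (fun j => i ≤ j), ℓ j) :
    ((∀ j k : Fin n, j < k → φ j k ≤ φ k k) ∧
      (∀ i j k : Fin n, i < j → j < k → φ i k = φ j k)) ↔
    (∃ π : Fin n → ℝ, (∀ j, π j ∈ Set.Icc (0:ℝ) 1) ∧
      (∀ i j : Fin n, i < j → φ i j = (1 - π j) * φ j j) ∧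
      (∀ i : Fin n, φ i i = ℓ i +
        ∑ k ∈ univ.filter (fun k => i < k),
          (∏ j ∈ univ.filter (fun j => i < j ∧ j ≤ k), π j) * ℓ k)) := by
  constructor
  · rintro ⟨hdl, hind⟩
    -- last-index base case
    have hlast : ∀ i : Fin n, (i : ℕ) + 1 = n → φ i i = ℓ i := by
      intro i hi
      have hb := hbalance i
      rw [fil_le, fil_last n i hi, sum_insert (notMem_empty i),
        sum_insert (notMem_empty i), sum_empty, sum_empty] at hb
      linarith
    -- positivity of diagonal
    have hpos : ∀ i : Fin n, 0 < φ i i := by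
      intro i
      by_cases hc : (i : ℕ) + 1 < n
      · set i' : Fin n := ⟨(i : ℕ) + 1, hc⟩ with hi'
        have hr := recur n ℓ φ hbalance hind i i' rfl
        have := hdl i i' (by rw [Fin.lt_def]; simp [hi'])
        have := hℓ i
        linarith
      · have : (i : ℕ) + 1 = n := by have := i.isLt; omega
        rw [hlast i this]; exact hℓ i
    -- define π
    set π : Fin n → ℝ := fun k =>
      if h : 0 < (k : ℕ) then
        1 - φ ⟨(k : ℕ) - 1, lt_of_le_of_lt (Nat.sub_le _ 1) k.isLt⟩ k / φ k k
      else 0 with hπdef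
    -- for all i < k, φ i k = φ (k-1) k
    have hpred : ∀ (i k : Fin n), i < k →
        φ i k = φ ⟨(k : ℕ) - 1, lt_of_le_of_lt (Nat.sub_le _ 1) k.isLt⟩ k := by
      intro i k hik
      have hik' := Fin.lt_def.mp hik
      by_cases he : (i : ℕ) = (k : ℕ) - 1
      · congr 1
        exact Fin.ext he
      · exact hind i ⟨(k : ℕ) - 1, lt_of_le_of_lt (Nat.sub_le _ 1) k.isLt⟩ k
          (by rw [Fin.lt_def]; simp; omega) (by rw [Fin.lt_def]; simp; omega)
    have hπval : ∀ (i k : Fin n), i < k → φ i k = (1 - π k) * φ k k := by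
      intro i k hik
      have hk0 : 0 < (k : ℕ) := by have := Fin.lt_def.mp hik; omega
      rw [hπdef]
      simp only [hk0, dif_pos]
      rw [hpred i k hik]
      have hne : φ k k ≠ 0 := (hpos k).ne'
      field_simp
      ring
    refine ⟨π, ?_, hπval, ?_⟩
    · intro k
      rw [hπdef]
      by_cases hk0 : 0 < (k : ℕ)
      · simp only [hk0, dif_pos]
        set km : Fin n := ⟨(k : ℕ) - 1, lt_of_le_of_lt (Nat.sub_le _ 1) k.isLt⟩ with hkm
        have hlt : km < k := by rw [Fin.lt_def]; simp [hkm]; omega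
        have h1 : 0 ≤ φ km k / φ k k := div_nonneg (hnonneg _ _) (hpos k).le
        have h2 : φ km k / φ k k ≤ 1 := (div_le_one (hpos k)).mpr (hdl km k hlt)
        constructor <;> [linarith; linarith]
      · simp only [hk0, dif_neg, not_false_iff]
        constructor <;> norm_num
    · -- diagonal formula by downward induction
      have key : ∀ m : ℕ, ∀ i : Fin n, n - (i : ℕ) ≤ m →
          φ i i = ℓ i + ∑ k ∈ univ.filter (fun k => i < k),
            (∏ j ∈ univ.filter (fun j => i < j ∧ j ≤ k), π j) * ℓ k := by
        intro m
        induction m with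
        | zero => intro i hi; have := i.isLt; omega
        | succ m ih =>
          intro i hi
          by_cases hc : (i : ℕ) + 1 < n
          · set i' : Fin n := ⟨(i : ℕ) + 1, hc⟩ with hi'def
            have hii' : i < i' := by rw [Fin.lt_def]; simp [hi'def]
            have hih := ih i' (by simp [hi'def]; omega)
            have hr := recur n ℓ φ hbalance hind i i' rfl
            have hv := hπval i i' hii'
            -- φ i i = ℓ i + π i' * φ i' i'
            have heq : φ i i = ℓ i + π i' * φ i' i' := by nlinarith [hr, hv]
            rw [heq, hih]
            -- now manipulate the sum
            have hnoti' : i' ∉ univ.filter (fun j => i' < j) := by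
              simp only [mem_filter, mem_univ, true_and]
              exact lt_irrefl i'
            rw [fil_lt n i i' rfl, sum_insert hnoti']
            rw [fil_sing n i i' rfl, prod_singleton]
            have hsum : ∑ k ∈ univ.filter (fun k => i' < k),
                (∏ j ∈ univ.filter (fun j => i < j ∧ j ≤ k), π j) * ℓ k
                = ∑ k ∈ univ.filter (fun k => i' < k),
                  π i' * ((∏ j ∈ univ.filter (fun j => i' < j ∧ j ≤ k), π j) * ℓ k) := by
              refine sum_congr rfl fun k hk => ?_
              simp only [mem_filter, mem_univ, true_and] at hk
              rw [fil_prod n i i' k rfl hk, prod_insert (by simp only [mem_filter, mem_univ, true_and, not_and]; intro h; exact absurd h (lt_irrefl i'))]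
              ring
            rw [hsum, ← mul_sum]
            ring
          · have hn : (i : ℕ) + 1 = n := by have := i.isLt; omega
            rw [hlast i hn, fil_last n i hn, sum_empty]
            ring
      intro i
      exact key (n - (i : ℕ)) i le_rfl
  · rintro ⟨π, hπ, h1, _⟩
    constructor
    · intro j k hjk
      rw [h1 j k hjk]
      have h0 := (hπ k).1
      have := hnonneg k k
      nlinarith
    · intro i j k hij hjk
      rw [h1 i k (lt_trans hij hjk), h1 j k hjk]
end

section
/- For each agent k and each agent i < k, the mixed second partial derivative of agent k's expected cost C_k with respect to x_i and x_k is nonpositive; that is, the induced investment game is supermodular (costs are submodular in own and earlier investments). -/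
open Finset

/-- Agent k's expected cost at profile x under solution φ. -/
noncomputable def expCost (n : ℕ) (p : Fin n → ℝ → ℝ) (φ : Fin n → Fin n → ℝ)
    (k : Fin n) (x : Fin n → ℝ) : ℝ :=
  (∑ j ∈ univ.filter (fun j => j < k),
    (∏ h ∈ univ.filter (fun h => h < j), p h (x h)) * (1 - p j (x j)) * φ j k)
  + (∏ h ∈ univ.filter (fun h => h < k), p h (x h)) * (1 - p k (x k)) * φ k k
  + x k

/-- For agents i < k, the mixed second partial derivative of agent k's
expected cost with respect to x_i and x_k is nonpositive (the induced game is
supermodular). -/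
theorem stmt_5 (n : ℕ) (p : Fin n → ℝ → ℝ) (φ : Fin n → Fin n → ℝ)
    (hp_mono : ∀ i, StrictMonoOn (p i) (Set.Ici 0))
    (hp_concave : ∀ i, StrictConcaveOn ℝ (Set.Ici 0) (p i))
    (hp_smooth : ∀ i, ContDiff ℝ 2 (p i))
    (hp_zero : ∀ i, p i 0 = 0)
    (hp_range : ∀ i x, 0 ≤ x → p i x ∈ Set.Icc (0:ℝ) 1)
    (hφ : ∀ i j, 0 ≤ φ i j)
    (x : Fin n → ℝ) (hx : ∀ i, 0 < x i)
    (i k : Fin n) (hik : i < k) :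
    deriv (fun s =>
        deriv (fun t => expCost n p φ k (Function.update (Function.update x i s) k t))
          (x k))
      (x i) ≤ 0 := by
  classical
  have hd : ∀ j : Fin n, Differentiable ℝ (p j) := fun j =>
    (hp_smooth j).differentiable (by norm_num)
  have hderiv_nonneg : ∀ (j : Fin n) (a : ℝ), 0 < a → 0 ≤ deriv (p j) a := by
    intro j a ha
    have h1 : HasDerivAt (p j) (deriv (p j) a) a := (hd j a).hasDerivAt
    have h2 : Filter.Tendsto (slope (p j) a) (nhdsWithin a (Set.Ioi a))
        (nhds (deriv (p j) a)) :=
      (hasDerivAt_iff_tendsto_slope.mp h1).mono_left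
        (nhdsWithin_mono a fun y hy => ne_of_gt hy)
    refine ge_of_tendsto h2 ?_
    filter_upwards [self_mem_nhdsWithin] with y hy
    have hay : a < y := hy
    rw [slope_def_field]
    exact div_nonneg (sub_nonneg.mpr ((hp_mono j).monotoneOn
        (Set.mem_Ici.mpr ha.le) (Set.mem_Ici.mpr (ha.le.trans hay.le)) hay.le))
      (sub_nonneg.mpr hay.le)
  have hiF : i ∈ univ.filter (fun h : Fin n => h < k) := by simp [hik]
  set P : ℝ := ∏ h ∈ (univ.filter (fun h : Fin n => h < k)).erase i, p h (x h) with hPdef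
  have hPnn : 0 ≤ P := Finset.prod_nonneg fun h _ => (hp_range h (x h) (hx h).le).1
  have houter : (fun s => deriv (fun t => expCost n p φ k
        (Function.update (Function.update x i s) k t)) (x k))
      = fun s => (p i s * P) * (-(deriv (p k) (x k))) * φ k k + 1 := by
    funext s
    have hB : (∏ h ∈ univ.filter (fun h : Fin n => h < k),
        p h (Function.update x i s h)) = p i s * P := by
      rw [← Finset.mul_prod_erase _ _ hiF, Function.update_self]
      congr 1
      exact Finset.prod_congr rfl fun h hh => by
        rw [Function.update_of_ne (Finset.ne_of_mem_erase hh)]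
    have heq : (fun t => expCost n p φ k (Function.update (Function.update x i s) k t))
        = fun t =>
          (∑ j ∈ univ.filter (fun j => j < k),
            (∏ h ∈ univ.filter (fun h => h < j), p h (Function.update x i s h)) *
              (1 - p j (Function.update x i s j)) * φ j k)
          + (p i s * P) * (1 - p k t) * φ k k + t := by
      funext t
      unfold expCost
      congr 1
      · congr 1
        · apply Finset.sum_congr rfl
          intro j hj
          have hjk : j < k := by simpa using hj
          rw [Function.update_of_ne (ne_of_lt hjk)]
          congr 2
          apply Finset.prod_congr rfl
          intro h hh
          have hhj : h < j := by simpa using hh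
          rw [Function.update_of_ne (ne_of_lt (hhj.trans hjk))]
        · rw [Function.update_self, ← hB]
          congr 2
          apply Finset.prod_congr rfl
          intro h hh
          have hhk : h < k := by simpa using hh
          rw [Function.update_of_ne (ne_of_lt hhk)]
      · simp
    rw [heq]
    have h1 : HasDerivAt (p k) (deriv (p k) (x k)) (x k) := (hd k (x k)).hasDerivAt
    have h2 : HasDerivAt (fun t => 1 - p k t) (-(deriv (p k) (x k))) (x k) :=
      h1.const_sub 1
    have h3 := (((h2.const_mul (p i s * P)).mul_const (φ k k)).const_add
      (∑ j ∈ univ.filter (fun j => j < k),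
        (∏ h ∈ univ.filter (fun h => h < j), p h (Function.update x i s h)) *
          (1 - p j (Function.update x i s j)) * φ j k)).add (hasDerivAt_id (x k))
    exact h3.deriv
  rw [houter]
  have h1 : HasDerivAt (p i) (deriv (p i) (x i)) (x i) := (hd i (x i)).hasDerivAt
  have h4 := (((h1.mul_const P).mul_const (-(deriv (p k) (x k)))).mul_const
    (φ k k)).add_const 1
  rw [h4.deriv]
  have hnn : 0 ≤ deriv (p i) (x i) * P * deriv (p k) (x k) * φ k k :=
    mul_nonneg (mul_nonneg (mul_nonneg (hderiv_nonneg i (x i) (hx i)) hPnn)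
      (hderiv_nonneg k (x k) (hx k))) (hφ k k)
  nlinarith [hnn]
end

section
/- Any first-best solution (one implementing efficient investments) must assign strictly positive indirect liability: there exist agents i < j with φ(i,j) > 0, provided n ≥ 2. -/
open Finset

/-- Any first-best solution (balanced, nonnegative, zero liability for
earlier agents, and with the Theorem-1 direct liabilities, where a_j = p_j(x*_j) ∈ (0,1))
must assign strictly positive indirect liability to some pair i < j, provided n ≥ 2. -/
theorem stmt_13 (n : ℕ) (hn : 2 ≤ n) (ℓ : Fin n → ℝ) (a : Fin n → ℝ)
    (φ : Fin n → Fin n → ℝ)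
    (hℓ : ∀ j, 0 < ℓ j)
    (ha : ∀ j, a j ∈ Set.Ioo (0:ℝ) 1)
    (hnonneg : ∀ i j, 0 ≤ φ i j)
    (hzero : ∀ i j : Fin n, j < i → φ i j = 0)
    (hbalance : ∀ i : Fin n,
      ∑ j ∈ univ.filter (fun j => i ≤ j), φ i j = ∑ j ∈ univ.filter (fun j => i ≤ j), ℓ j)
    (hdirect : ∀ i : Fin n, φ i i = ℓ i +
      ∑ k ∈ univ.filter (fun k => i < k),
        (∏ j ∈ univ.filter (fun j => i < j ∧ j ≤ k), a j) * ℓ k) :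
    ∃ i j : Fin n, i < j ∧ 0 < φ i j := by
  by_contra h
  push_neg at h
  have hz : ∀ i j : Fin n, i < j → φ i j = 0 := fun i j hij =>
    le_antisymm (h i j hij) (hnonneg i j)
  have hpos : 0 < n := by omega
  set i0 : Fin n := ⟨0, hpos⟩ with hi0
  have hb := hbalance i0
  -- LHS is φ i0 i0
  have hL : ∑ j ∈ univ.filter (fun j => i0 ≤ j), φ i0 j = φ i0 i0 := by
    apply Finset.sum_eq_single_of_mem
    · simp [Fin.le_def, -Fin.val_fin_le]
    · intro j hj hne
      rcases lt_or_gt_of_ne (Ne.symm hne) with h1 | h1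
      · exact hz i0 j h1
      · exact hzero i0 j h1
  -- RHS split
  have hset : univ.filter (fun j : Fin n => i0 ≤ j)
      = insert i0 (univ.filter (fun j => i0 < j)) := by
    ext j
    simp [Fin.le_def, Fin.lt_def, Fin.ext_iff, -Fin.val_fin_le, -Fin.val_fin_lt]
    omega
  have hnotmem : i0 ∉ univ.filter (fun j : Fin n => i0 < j) := by simp
  have hR : ∑ j ∈ univ.filter (fun j => i0 ≤ j), ℓ j
      = ℓ i0 + ∑ j ∈ univ.filter (fun j => i0 < j), ℓ j := by
    rw [hset, Finset.sum_insert hnotmem]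
  rw [hL, hR, hdirect i0] at hb
  have heq : ∑ k ∈ univ.filter (fun k => i0 < k),
      (∏ j ∈ univ.filter (fun j => i0 < j ∧ j ≤ k), a j) * ℓ k
      = ∑ j ∈ univ.filter (fun j => i0 < j), ℓ j := by linarith
  have hlt : ∑ k ∈ univ.filter (fun k => i0 < k),
      (∏ j ∈ univ.filter (fun j => i0 < j ∧ j ≤ k), a j) * ℓ k
      < ∑ j ∈ univ.filter (fun j => i0 < j), ℓ j := by
    apply Finset.sum_lt_sum_of_nonempty
    · refine ⟨⟨1, by omega⟩, ?_⟩
      simp [Fin.lt_def, -Fin.val_fin_lt, hi0]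
    · intro k hk
      simp only [mem_filter] at hk
      have hne : (univ.filter (fun j : Fin n => i0 < j ∧ j ≤ k)).Nonempty :=
        ⟨k, by simp [hk.2]⟩
      have hprodpos : 0 ≤ ∏ j ∈ univ.filter (fun j : Fin n => i0 < j ∧ j ≤ k), a j :=
        Finset.prod_nonneg fun j _ => (ha j).1.le
      have hprodlt : ∏ j ∈ univ.filter (fun j : Fin n => i0 < j ∧ j ≤ k), a j < 1 := by
        calc ∏ j ∈ univ.filter (fun j : Fin n => i0 < j ∧ j ≤ k), a j
            < ∏ _j ∈ univ.filter (fun j : Fin n => i0 < j ∧ j ≤ k), (1:ℝ) :=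
              Finset.prod_lt_prod_of_nonempty (fun j _ => (ha j).1) (fun j _ => (ha j).2) hne
          _ = 1 := Finset.prod_const_one
      nlinarith [hℓ k]
  linarith
end

section
/- The solution φ* defined by φ*(i,i) = ℓ_i + ∑_{k > i} (∏_{i < j ≤ k} p_j(x*_j))·ℓ_k and φ*(i,j) = (1 − p_j(x*_j))·φ*(j,j) for i < j is balanced: for each i, ∑_{j ≥ i} φ*(i,j) = ∑_{j ≥ i} ℓ_j. -/
open Finset

/-- The solution φ* with direct liabilities
φ*(i,i) = ℓ_i + ∑_{k>i} (∏_{i<j≤k} a_j)·ℓ_k (a_j = p_j(x*_j) ∈ (0,1)) and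
indirect liabilities φ*(i,j) = (1 − a_j)·φ*(j,j) for i < j (and 0 for j < i)
is balanced: ∑_{j≥i} φ*(i,j) = ∑_{j≥i} ℓ_j for each i. -/
theorem stmt_14 (n : ℕ) (ℓ : Fin n → ℝ) (a : Fin n → ℝ)
    (φstar : Fin n → Fin n → ℝ)
    (hℓ : ∀ j, 0 < ℓ j)
    (ha : ∀ j, a j ∈ Set.Ioo (0:ℝ) 1)
    (hdiag : ∀ i : Fin n, φstar i i = ℓ i +
      ∑ k ∈ univ.filter (fun k => i < k),
        (∏ j ∈ univ.filter (fun j => i < j ∧ j ≤ k), a j) * ℓ k)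
    (hoff : ∀ i j : Fin n, i < j → φstar i j = (1 - a j) * φstar j j)
    (hzero : ∀ i j : Fin n, j < i → φstar i j = 0) :
    ∀ i : Fin n,
      ∑ j ∈ univ.filter (fun j => i ≤ j), φstar i j
        = ∑ j ∈ univ.filter (fun j => i ≤ j), ℓ j := by
  rcases n with - | m
  · exact fun i => i.elim0
  intro i
  induction i using Fin.reverseInduction with
  | last =>
    have h1 : (univ.filter (fun j => Fin.last m ≤ j)) = {Fin.last m} := by
      ext j; simp [Fin.last_le_iff, eq_comm]
    have h2 : (univ.filter (fun j => Fin.last m < j)) = (∅ : Finset (Fin (m+1))) := by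
      ext j; simp [Fin.lt_iff_val_lt_val]; omega
    rw [h1, sum_singleton, sum_singleton, hdiag, h2, sum_empty, add_zero]
  | cast i ih =>
    set ic := i.castSucc with hic
    set is := i.succ with his
    have hlt : ic < is := Fin.castSucc_lt_succ (i := i)
    -- set identities
    have hset1 : (univ.filter (fun k => ic < k)) = insert is (univ.filter (fun k => is < k)) := by
      ext k
      simp only [mem_filter, mem_univ, true_and, mem_insert]
      constructor
      · intro h
        rcases eq_or_lt_of_le (Fin.castSucc_lt_iff_succ_le.mp h) with h' | h'
        · exact Or.inl h'.symm
        · exact Or.inr h'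
      · rintro (rfl | h)
        · exact hlt
        · exact hlt.trans h
    have hnmem : is ∉ univ.filter (fun k => is < k) := by simp
    have hset2 : (univ.filter (fun j => ic ≤ j)) = insert ic (univ.filter (fun k => ic < k)) := by
      ext k
      simp only [mem_filter, mem_univ, true_and, mem_insert]
      constructor
      · intro h
        rcases eq_or_lt_of_le h with h' | h'
        · exact Or.inl h'.symm
        · exact Or.inr h'
      · rintro (rfl | h)
        · exact le_refl _
        · exact h.le
    have hnmem2 : ic ∉ univ.filter (fun k => ic < k) := by simp
    have hset3 : (univ.filter (fun j => is ≤ j)) = insert is (univ.filter (fun k => is < k)) := by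
      ext k
      simp only [mem_filter, mem_univ, true_and, mem_insert]
      constructor
      · intro h
        rcases eq_or_lt_of_le h with h' | h'
        · exact Or.inl h'.symm
        · exact Or.inr h'
      · rintro (rfl | h)
        · exact le_refl _
        · exact h.le
    -- recursion for the diagonal
    have hDrec : φstar ic ic = ℓ ic + a is * φstar is is := by
      rw [hdiag ic, hdiag is, hset1, sum_insert hnmem]
      have hterm : (∏ j ∈ univ.filter (fun j => ic < j ∧ j ≤ is), a j) * ℓ is
          = a is * ℓ is := by
        congr 1
        have : (univ.filter (fun j => ic < j ∧ j ≤ is)) = {is} := by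
          ext j
          simp only [mem_filter, mem_univ, true_and, mem_singleton]
          constructor
          · rintro ⟨h1, h2⟩
            exact le_antisymm h2 (Fin.castSucc_lt_iff_succ_le.mp h1)
          · rintro rfl; exact ⟨hlt, le_refl _⟩
        rw [this, prod_singleton]
      have hrest : ∀ k ∈ univ.filter (fun k => is < k),
          (∏ j ∈ univ.filter (fun j => ic < j ∧ j ≤ k), a j) * ℓ k
            = a is * ((∏ j ∈ univ.filter (fun j => is < j ∧ j ≤ k), a j) * ℓ k) := by
        intro k hk
        simp only [mem_filter, mem_univ, true_and] at hk
        have hset4 : (univ.filter (fun j => ic < j ∧ j ≤ k))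
            = insert is (univ.filter (fun j => is < j ∧ j ≤ k)) := by
          ext j
          simp only [mem_filter, mem_univ, true_and, mem_insert]
          constructor
          · rintro ⟨h1, h2⟩
            rcases eq_or_lt_of_le (Fin.castSucc_lt_iff_succ_le.mp h1) with h' | h'
            · exact Or.inl h'.symm
            · exact Or.inr ⟨h', h2⟩
          · rintro (rfl | ⟨h1, h2⟩)
            · exact ⟨hlt, hk.le⟩
            · exact ⟨hlt.trans h1, h2⟩
        have hnmem3 : is ∉ univ.filter (fun j => is < j ∧ j ≤ k) := by simp
        rw [hset4, prod_insert hnmem3, mul_assoc]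
      rw [sum_congr rfl hrest, hterm, ← mul_sum, ← mul_add]
    -- main computation
    rw [hset2, sum_insert hnmem2, sum_insert hnmem2, hset1, sum_insert hnmem,
      sum_insert hnmem]
    have hoffsum : ∀ j ∈ univ.filter (fun k => is < k), φstar ic j = φstar is j := by
      intro j hj
      simp only [mem_filter, mem_univ, true_and] at hj
      rw [hoff ic j (hlt.trans hj), hoff is j hj]
    rw [sum_congr rfl hoffsum, hoff ic is hlt, hDrec]
    have := ih
    rw [hset3, sum_insert hnmem, sum_insert hnmem] at this
    linarith [this]
end

section
/- A solution satisfies independent indirect liabilities and implements efficient investments if and only if it equals φ*. -/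
open Finset

/-- Proposition 4: A solution φ satisfies independent indirect
liabilities and implements efficient investments (equivalently, by Theorem 1, has
the first-best direct liabilities) if and only if φ = φ*, where φ* is defined by
the first-best direct liabilities and φ*(i,k) = (1 − a_k)·φ*(k,k) for i < k,
with a_j = p_j(x*_j) ∈ (0,1). -/
theorem stmt_15 (n : ℕ) (ℓ : Fin n → ℝ) (a : Fin n → ℝ)
    (φ φstar : Fin n → Fin n → ℝ)
    (hℓ : ∀ j, 0 < ℓ j)
    (ha : ∀ j, a j ∈ Set.Ioo (0:ℝ) 1)
    -- φ is a solution: nonnegative, balanced, zero liability for earlier agents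
    (hnonneg : ∀ i j, 0 ≤ φ i j)
    (hzero : ∀ i j : Fin n, j < i → φ i j = 0)
    (hbalance : ∀ i : Fin n,
      ∑ j ∈ univ.filter (fun j => i ≤ j), φ i j = ∑ j ∈ univ.filter (fun j => i ≤ j), ℓ j)
    -- definition of φ*
    (hstar_diag : ∀ i : Fin n, φstar i i = ℓ i +
      ∑ k ∈ univ.filter (fun k => i < k),
        (∏ j ∈ univ.filter (fun j => i < j ∧ j ≤ k), a j) * ℓ k)
    (hstar_off : ∀ i k : Fin n, i < k → φstar i k = (1 - a k) * φstar k k)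
    (hstar_zero : ∀ i k : Fin n, k < i → φstar i k = 0) :
    ((∀ i j k : Fin n, i < j → j < k → φ i k = φ j k) ∧
      (∀ i : Fin n, φ i i = ℓ i +
        ∑ k ∈ univ.filter (fun k => i < k),
          (∏ j ∈ univ.filter (fun j => i < j ∧ j ≤ k), a j) * ℓ k)) ↔
    φ = φstar := by
  constructor
  · rintro ⟨hindep, hdiag⟩
    have hdd : ∀ m : Fin n, φ m m = φstar m m := fun m =>
      (hdiag m).trans (hstar_diag m).symm
    funext i k
    rcases lt_trichotomy i k with hik | rfl | hki
    · -- i < k ; first show the claim for i0 = k - 1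
      have hk1 : 1 ≤ k.val := by
        have := (Fin.lt_def.mp hik); omega
      set i0 : Fin n := ⟨k.val - 1, by omega⟩ with hi0def
      have hi0v : i0.val = k.val - 1 := rfl
      have hi0k : i0 < k := by rw [Fin.lt_def]; omega
      set S : Finset (Fin n) := univ.filter (fun j => k < j) with hSdef
      have hkS : k ∉ S := by simp [hSdef]
      have hi0S : i0 ∉ insert k S := by
        simp only [mem_insert, hSdef, mem_filter, mem_univ, true_and,
          Fin.ext_iff, Fin.lt_def, hi0v]
        omega
      have hset1 : univ.filter (fun j => i0 ≤ j) = insert i0 (insert k S) := by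
        ext j
        simp only [mem_filter, mem_univ, true_and, mem_insert, hSdef,
          Fin.ext_iff, Fin.le_def, Fin.lt_def, hi0v]
        omega
      have hset2 : univ.filter (fun j => k ≤ j) = insert k S := by
        ext j
        simp only [mem_filter, mem_univ, true_and, mem_insert, hSdef,
          Fin.ext_iff, Fin.le_def, Fin.lt_def]
        omega
      have hset3 : univ.filter (fun j => i0 < j) = insert k S := by
        ext j
        simp only [mem_filter, mem_univ, true_and, mem_insert, hSdef,
          Fin.ext_iff, Fin.lt_def, hi0v]
        omega
      -- balance at i0
      have hb1 := hbalance i0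
      rw [hset1, sum_insert hi0S, sum_insert hkS, sum_insert hi0S,
        sum_insert hkS] at hb1
      -- replace φ i0 m by φ k m for m ∈ S
      have hrepl : ∑ m ∈ S, φ i0 m = ∑ m ∈ S, φ k m := by
        refine sum_congr rfl fun m hm => ?_
        have hkm : k < m := by
          simpa [hSdef] using hm
        exact hindep i0 k m hi0k hkm
      rw [hrepl] at hb1
      -- balance at k
      have hb2 := hbalance k
      rw [hset2, sum_insert hkS, sum_insert hkS] at hb2
      have hkey : φ i0 k = ℓ i0 + φ k k - φ i0 i0 := by linarith
      -- compute φ i0 i0 = ℓ i0 + a k * φstar k k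
      have hprod_k : univ.filter (fun j => i0 < j ∧ j ≤ k) = {k} := by
        ext j
        simp only [mem_filter, mem_univ, true_and, mem_singleton,
          Fin.ext_iff, Fin.le_def, Fin.lt_def, hi0v]
        omega
      have hprod_m : ∀ m : Fin n, k < m →
          univ.filter (fun j => i0 < j ∧ j ≤ m)
            = insert k (univ.filter (fun j => k < j ∧ j ≤ m)) := by
        intro m hm
        ext j
        simp only [mem_filter, mem_univ, true_and, mem_insert,
          Fin.ext_iff, Fin.le_def, Fin.lt_def, hi0v]
        have := Fin.lt_def.mp hm
        omega
      have hdiag_i0 : φ i0 i0 = ℓ i0 + a k * φstar k k := by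
        rw [hdiag i0, hset3, sum_insert hkS, hprod_k, prod_singleton]
        have hterm : ∀ m ∈ S,
            (∏ j ∈ univ.filter (fun j => i0 < j ∧ j ≤ m), a j) * ℓ m
              = a k * ((∏ j ∈ univ.filter (fun j => k < j ∧ j ≤ m), a j) * ℓ m) := by
          intro m hm
          have hkm : k < m := by simpa [hSdef] using hm
          have hknotin : k ∉ univ.filter (fun j => k < j ∧ j ≤ m) := by
            simp
          rw [hprod_m m hkm, prod_insert hknotin]
          ring
        rw [sum_congr rfl hterm, ← mul_sum, hstar_diag k, hSdef]
        ring
      have hmain : φ i0 k = (1 - a k) * φstar k k := by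
        rw [hkey, hdiag_i0, hdd k]; ring
      -- now general i < k
      rcases eq_or_lt_of_le (show i ≤ i0 by
          rw [Fin.le_def, hi0v]; have := Fin.lt_def.mp hik; omega) with heq | hlt
      · rw [heq, hstar_off i0 k hi0k]; exact hmain
      · rw [hindep i i0 k hlt hi0k, hmain, hstar_off i k hik]
    · rw [hdiag, hstar_diag]
    · rw [hzero _ _ hki, hstar_zero _ _ hki]
  · rintro rfl
    exact ⟨fun i j k hij hjk => by
      rw [hstar_off _ _ hjk, hstar_off _ _ (hij.trans hjk)], hstar_diag⟩
end

section
/- Under φ*, for all agents i < k, the partial derivative of agent k's expected cost with respect to agent i's investment vanishes at the efficient profile: ∂C_k(x*; φ*)/∂x_i = 0. -/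
open Finset

lemma map_val_filter_lt (n : ℕ) (k : Fin n) :
    (univ.filter (fun h : Fin n => h < k)).map Fin.valEmbedding = Finset.range k.val := by
  ext m
  simp only [Finset.mem_map, Finset.mem_filter, Finset.mem_univ, true_and,
    Fin.valEmbedding_apply, Finset.mem_range]
  constructor
  · rintro ⟨h, hh, rfl⟩; exact hh
  · intro hm; exact ⟨⟨m, hm.trans k.isLt⟩, hm, rfl⟩

lemma tele_range (g : ℕ → ℝ) (m : ℕ) :
    ∑ j ∈ Finset.range m, (∏ h ∈ Finset.range j, g h) * (1 - g j)
      = 1 - ∏ h ∈ Finset.range m, g h := by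
  induction m with
  | zero => simp
  | succ m ih =>
      rw [Finset.sum_range_succ, Finset.prod_range_succ, ih]; ring

lemma telescope (n : ℕ) (f : Fin n → ℝ) (k : Fin n) :
    ∑ j ∈ univ.filter (fun j => j < k),
        (∏ h ∈ univ.filter (fun h => h < j), f h) * (1 - f j)
      = 1 - ∏ h ∈ univ.filter (fun h => h < k), f h := by
  set g : ℕ → ℝ := fun m => if h : m < n then f ⟨m, h⟩ else 1 with hg
  have hfg : ∀ h : Fin n, f h = g h.val := by
    intro h; simp [hg, h.isLt]
  have hprod : ∀ j : Fin n, ∏ h ∈ univ.filter (fun h => h < j), f h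
      = ∏ m ∈ Finset.range j.val, g m := by
    intro j
    rw [← map_val_filter_lt n j, Finset.prod_map]
    exact Finset.prod_congr rfl fun h _ => hfg h
  have hsum : ∑ j ∈ univ.filter (fun j => j < k),
      (∏ h ∈ univ.filter (fun h => h < j), f h) * (1 - f j)
      = ∑ j ∈ Finset.range k.val, (∏ h ∈ Finset.range j, g h) * (1 - g j) := by
    rw [← map_val_filter_lt n k, Finset.sum_map]
    refine Finset.sum_congr rfl fun j _ => ?_
    rw [hprod j, hfg j]; rfl
  rw [hsum, hprod k, tele_range]

/-- Under φ* (with φ*(i,k) = (1 − p_k(x*_k))·φ*(k,k) for i < k and the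
Theorem-1 direct liabilities), for all i < k the partial derivative of agent k's
expected cost with respect to x_i vanishes at the efficient profile x*. -/
theorem stmt_16 (n : ℕ) (ℓ : Fin n → ℝ) (p : Fin n → ℝ → ℝ)
    (φstar : Fin n → Fin n → ℝ)
    (hℓ : ∀ j, 0 < ℓ j)
    (hp_diff : ∀ i, Differentiable ℝ (p i))
    (hp_pos : ∀ i x, 0 < x → 0 < p i x)
    (xstar : Fin n → ℝ) (hx_pos : ∀ i, 0 < xstar i)
    (hstar_diag : ∀ i : Fin n, φstar i i = ℓ i +
      ∑ k ∈ univ.filter (fun k => i < k),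
        (∏ j ∈ univ.filter (fun j => i < j ∧ j ≤ k), p j (xstar j)) * ℓ k)
    (hstar_off : ∀ i k : Fin n, i < k →
      φstar i k = (1 - p k (xstar k)) * φstar k k) :
    ∀ i k : Fin n, i < k →
      deriv (fun t => expCost n p φstar k (Function.update xstar i t)) (xstar i) = 0 := by
  intro i k hik
  set c : ℝ := (1 - p k (xstar k)) * φstar k k with hc
  have hconst : (fun t => expCost n p φstar k (Function.update xstar i t))
      = fun _ => c + xstar k := by
    funext t
    set y := Function.update xstar i t with hy
    have hyk : y k = xstar k := Function.update_of_ne hik.ne' _ _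
    have h1 : ∑ j ∈ univ.filter (fun j => j < k),
        (∏ h ∈ univ.filter (fun h => h < j), p h (y h)) * (1 - p j (y j)) * φstar j k
        = (1 - ∏ h ∈ univ.filter (fun h => h < k), p h (y h)) * c := by
      rw [← telescope n (fun h => p h (y h)) k, Finset.sum_mul]
      refine Finset.sum_congr rfl fun j hj => ?_
      have hjk : j < k := by simpa using hj
      rw [hstar_off j k hjk, hc]
    show (∑ j ∈ univ.filter (fun j => j < k),
        (∏ h ∈ univ.filter (fun h => h < j), p h (y h)) * (1 - p j (y j)) * φstar j k)
      + (∏ h ∈ univ.filter (fun h => h < k), p h (y h)) * (1 - p k (y k)) * φstar k k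
      + y k = c + xstar k
    rw [h1, hyk, hc]; ring
  rw [hconst]
  exact deriv_const _ _
end
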